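/- Let n, n1 ≥ 1, r ≥ 0, m1, m2 ≥ 0 with m+r ≥ 2 where m = m1+m2, let d0 ∈ U(n; 2^{m1} 3^{m2}), d1 ∈ U(n1; 2^{m1} 3^{m2}), let d2 be a column-balanced n1×r matrix with entries in {1,2}, and let D3 be the corresponding column augmented design. Then E(f_NOD)(D3) = (n+n1)(m+r)/(m+r−1) + [1/((m+r)(m+r−1))]·( Σ_{i≠j} λ_{ij}(D3)² − r·(n² + n1²/2) − (m1/2 + m2/3 + m1(m1−1)/4 + (m2+r)(m2+r−1)/9 + m1(m2+r)/3)·(n+n1)² ), where λ_{ij}(D3) is the number of columns of D3 (out of all m+r columns) in which rows i and j agree, and the sum runs over all ordered pairs of distinct rows i ≠ j of D3. -/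
import Mathlib


open Finset

noncomputable section

namespace CAUD

/-- The mapped point value `u = (2x+1)/(2q)`. -/
def uVal (q x : ℕ) : ℝ := (2 * (x : ℝ) + 1) / (2 * (q : ℝ))

/-- The squared wrap-around L2-discrepancy of an `N × M` design whose `k`-th
column takes values in `{0, …, q k - 1}`. -/
def WD {N M : ℕ} (q : Fin M → ℕ) (x : Fin N → Fin M → ℕ) : ℝ :=
  -((4 : ℝ) / 3) ^ M + (1 / (N : ℝ) ^ 2) *
    ∑ i : Fin N, ∑ j : Fin N, ∏ k : Fin M,
      ((3 : ℝ) / 2 - |uVal (q k) (x i k) - uVal (q k) (x j k)| *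
        (1 - |uVal (q k) (x i k) - uVal (q k) (x j k)|))

/-- A mixed-level U-type design in `U(N; 2^{m1} 3^{m2})`: the first `m1` columns are
two-level and balanced, the last `m2` columns are three-level and balanced. -/
def IsUType (N m1 m2 : ℕ) (d : Fin N → Fin (m1 + m2) → ℕ) : Prop :=
  ∀ k : Fin (m1 + m2),
    if (k : ℕ) < m1 then
      (∀ i, d i k < 2) ∧ ∀ v < 2, 2 * (univ.filter (fun i => d i k = v)).card = N
    else
      (∀ i, d i k < 3) ∧ ∀ v < 3, 3 * (univ.filter (fun i => d i k = v)).card = N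

/-- A column-balanced `n1 × r` matrix with entries in `{1, 2}`: every column has
exactly `n1/2` entries equal to 1 and `n1/2` entries equal to 2. -/
def IsBalanced (n1 r : ℕ) (d2 : Fin n1 → Fin r → ℕ) : Prop :=
  (∀ i k, d2 i k = 1 ∨ d2 i k = 2) ∧
  ∀ k, 2 * (univ.filter (fun i => d2 i k = 1)).card = n1 ∧
       2 * (univ.filter (fun i => d2 i k = 2)).card = n1

/-- The column augmented design: first `n` rows are `(d0, 0)`, last `n1` rows `(d1, d2)`. -/
def augDesign (n n1 m r : ℕ) (d0 : Fin n → Fin m → ℕ) (d1 : Fin n1 → Fin m → ℕ)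
    (d2 : Fin n1 → Fin r → ℕ) : Fin (n + n1) → Fin (m + r) → ℕ := fun i k =>
  if hi : (i : ℕ) < n then
    if hk : (k : ℕ) < m then d0 ⟨i, hi⟩ ⟨k, hk⟩ else 0
  else
    if hk : (k : ℕ) < m then d1 ⟨(i : ℕ) - n, by have := i.isLt; omega⟩ ⟨k, hk⟩
    else d2 ⟨(i : ℕ) - n, by have := i.isLt; omega⟩ ⟨(k : ℕ) - m, by have := k.isLt; omega⟩

/-- Append one blocking column: 0 on the initial rows, 1 on the follow-up rows. -/
def appendOne (n n1 M : ℕ) (D : Fin (n + n1) → Fin M → ℕ) :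
    Fin (n + n1) → Fin (M + 1) → ℕ := fun i k =>
  if hk : (k : ℕ) < M then D i ⟨k, hk⟩ else if (i : ℕ) < n then 0 else 1

/-- Append two blocking columns: the first is 0 on the initial rows and 1 on the
follow-up rows; the second is 0 on the initial rows and the first `n1/2` follow-up
rows, and 1 on the remaining follow-up rows. -/
def appendTwo (n n1 M : ℕ) (D : Fin (n + n1) → Fin M → ℕ) :
    Fin (n + n1) → Fin (M + 2) → ℕ := fun i k =>
  if hk : (k : ℕ) < M then D i ⟨k, hk⟩
  else if (k : ℕ) = M then (if (i : ℕ) < n then 0 else 1)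
  else (if (i : ℕ) < n + n1 / 2 then 0 else 1)

/-- Level sizes of the (possibly blocking-augmented) column augmented design:
first `m1` columns are two-level, the next `m2 + r` are three-level, anything
after that (blocking columns) is two-level. -/
def qfun (m1 m2 r k : ℕ) : ℕ :=
  if k < m1 then 2 else if k < m1 + m2 + r then 3 else 2

/-- Coincidence number among the first `m1` columns. -/
def Fco {N M : ℕ} (m1 : ℕ) (D : Fin N → Fin M → ℕ) (i j : Fin N) : ℕ :=
  (univ.filter (fun k : Fin M => (k : ℕ) < m1 ∧ D i k = D j k)).card

/-- Coincidence number among columns `m1, …, m1 + m2 - 1`. -/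
def Vco {N M : ℕ} (m1 m2 : ℕ) (D : Fin N → Fin M → ℕ) (i j : Fin N) : ℕ :=
  (univ.filter (fun k : Fin M => m1 ≤ (k : ℕ) ∧ (k : ℕ) < m1 + m2 ∧ D i k = D j k)).card

/-- Coincidence number among the columns `≥ m`, counting agreements with common
value in `{1, 2}`. -/
def Tco {N M : ℕ} (m : ℕ) (D : Fin N → Fin M → ℕ) (i j : Fin N) : ℕ :=
  (univ.filter (fun k : Fin M =>
    m ≤ (k : ℕ) ∧ D i k = D j k ∧ (D i k = 1 ∨ D i k = 2))).card

/-- Total coincidence number between two rows. -/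
def lam {N M : ℕ} (D : Fin N → Fin M → ℕ) (i j : Fin N) : ℕ :=
  (univ.filter (fun k : Fin M => D i k = D j k)).card

/-- Number of rows whose `k`-th entry is `u` and whose `l`-th entry is `v`. -/
def nuv {N M : ℕ} (d : Fin N → Fin M → ℕ) (k l : Fin M) (u v : ℕ) : ℕ :=
  (univ.filter (fun i : Fin N => d i k = u ∧ d i l = v)).card

/-- Non-orthogonality of a pair of columns. -/
def fNOD {N M : ℕ} (q : Fin M → ℕ) (d : Fin N → Fin M → ℕ) (k l : Fin M) : ℝ :=
  ∑ u ∈ Finset.range (q k), ∑ v ∈ Finset.range (q l),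
    ((nuv d k l u v : ℝ) - (N : ℝ) / ((q k : ℝ) * (q l : ℝ))) ^ 2

/-- The `E(f_NOD)` criterion: average non-orthogonality over all pairs of columns. -/
def EfNOD {N M : ℕ} (q : Fin M → ℕ) (d : Fin N → Fin M → ℕ) : ℝ :=
  (∑ k : Fin M, ∑ l : Fin M, if (k : ℕ) < (l : ℕ) then fNOD q d k l else 0) /
    (Nat.choose M 2 : ℝ)

/-- Stacking the stage designs `d 0, …, d (l-1)` on top of one another. -/
def stack (M : ℕ) (ns : ℕ → ℕ) (d : (j : ℕ) → Fin (ns j) → Fin M → ℕ) :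
    (l : ℕ) → Fin (∑ j ∈ Finset.range l, ns j) → Fin M → ℕ
  | 0 => fun _ _ => 0
  | l + 1 => fun i =>
    let i' : Fin ((∑ j ∈ Finset.range l, ns j) + ns l) :=
      Fin.cast (Finset.sum_range_succ ns l) i
    if h : (i' : ℕ) < ∑ j ∈ Finset.range l, ns j then
      stack M ns d l ⟨(i' : ℕ), h⟩
    else d l ⟨(i' : ℕ) - ∑ j ∈ Finset.range l, ns j, by have := i'.isLt; omega⟩

def aa : ℝ := Real.log (6 / 5)

def bb : ℝ := Real.log (27 / 23)

/-- The constant `C(s)`. -/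
def Cconst (n n1 m s : ℕ) : ℝ :=
  -(((4 : ℝ) / 3) ^ s - ((n : ℝ) ^ 2 / ((n : ℝ) + n1) ^ 2) * ((3 : ℝ) / 2) ^ s) * ((4 : ℝ) / 3) ^ m
  + ((n1 : ℝ) / ((n : ℝ) + n1) ^ 2) * ((3 : ℝ) / 2) ^ (m + s)

def phi1 (n1 m1 m2 r : ℕ) : ℝ :=
  aa * m1 * ((n1 : ℝ) - 2) / (2 * ((n1 : ℝ) - 1)) + bb * m2 * ((n1 : ℝ) - 3) / (3 * ((n1 : ℝ) - 1))
  + bb * r * ((n1 : ℝ) - 2) / (2 * ((n1 : ℝ) - 1))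

def phi2 (m1 m2 : ℕ) : ℝ := aa * m1 / 2 + bb * m2 / 3

def T1c (n1 m1 m2 r : ℕ) : ℝ := (n1 : ℝ) * ((n1 : ℝ) - 1) * Real.exp (phi1 n1 m1 m2 r)

def T2c (n n1 m1 m2 : ℕ) : ℝ := (n : ℝ) * (n1 : ℝ) * Real.exp (phi2 m1 m2)

/-- Lower bound `LBW3` (mixed-level case, Theorem 1). -/
def LBW3 (n n1 m1 m2 r : ℕ) (wd0 : ℝ) : ℝ :=
  Cconst n n1 (m1 + m2) r + ((n : ℝ) ^ 2 / ((n : ℝ) + n1) ^ 2) * ((3 : ℝ) / 2) ^ r * wd0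
  + (1 / ((n : ℝ) + n1) ^ 2) * ((5 : ℝ) / 4) ^ m1 * ((23 : ℝ) / 18) ^ (m2 + r) *
      (T1c n1 m1 m2 r + 2 * T2c n n1 m1 m2)

def phi1p (n1 m r : ℕ) : ℝ :=
  aa * m * ((n1 : ℝ) - 2) / (2 * ((n1 : ℝ) - 1)) + bb * r * ((n1 : ℝ) - 2) / (2 * ((n1 : ℝ) - 1))

def T1pc (n1 m r : ℕ) : ℝ := (n1 : ℝ) * ((n1 : ℝ) - 1) * Real.exp (phi1p n1 m r)

def w1 (m : ℕ) : ℕ := m / 2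

def q1c (n n1 m : ℕ) : ℝ := (m : ℝ) * n * n1 / 2 - (n : ℝ) * n1 * (w1 m : ℝ)

def p1c (n n1 m : ℕ) : ℝ := (n : ℝ) * n1 - q1c n n1 m

/-- Lower bound `LBW3` for a two-level initial design (Theorem 2). -/
def LBW32 (n n1 m r : ℕ) (wd0 : ℝ) : ℝ :=
  Cconst n n1 m r + ((n : ℝ) ^ 2 / ((n : ℝ) + n1) ^ 2) * ((3 : ℝ) / 2) ^ r * wd0
  + (1 / ((n : ℝ) + n1) ^ 2) * ((5 : ℝ) / 4) ^ m * ((23 : ℝ) / 18) ^ r *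
      (T1pc n1 m r + 2 * (p1c n n1 m * ((6 : ℝ) / 5) ^ w1 m + q1c n n1 m * ((6 : ℝ) / 5) ^ (w1 m + 1)))

def w2 (n1 m r : ℕ) : ℤ :=
  ⌊(m : ℝ) * ((n1 : ℝ) - 3) / (3 * ((n1 : ℝ) - 1)) + (r : ℝ) * ((n1 : ℝ) - 2) / (2 * ((n1 : ℝ) - 1))⌋

def q2c (n1 m r : ℕ) : ℝ :=
  (m : ℝ) * n1 * ((n1 : ℝ) - 3) / 3 + (r : ℝ) * n1 * ((n1 : ℝ) - 2) / 2
  - (n1 : ℝ) * ((n1 : ℝ) - 1) * (w2 n1 m r : ℝ)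

def p2c (n1 m r : ℕ) : ℝ := (n1 : ℝ) * ((n1 : ℝ) - 1) - q2c n1 m r

def w3 (m : ℕ) : ℕ := m / 3

def q3c (n n1 m : ℕ) : ℝ := (m : ℝ) * n * n1 / 3 - (n : ℝ) * n1 * (w3 m : ℝ)

def p3c (n n1 m : ℕ) : ℝ := (n : ℝ) * n1 - q3c n n1 m

/-- Lower bound `LBW3` for a three-level initial design (Theorem 3). -/
def LBW33 (n n1 m r : ℕ) (wd0 : ℝ) : ℝ :=
  Cconst n n1 m r + ((n : ℝ) ^ 2 / ((n : ℝ) + n1) ^ 2) * ((3 : ℝ) / 2) ^ r * wd0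
  + (1 / ((n : ℝ) + n1) ^ 2) * ((23 : ℝ) / 18) ^ (m + r) *
      (p2c n1 m r * ((27 : ℝ) / 23) ^ w2 n1 m r + q2c n1 m r * ((27 : ℝ) / 23) ^ (w2 n1 m r + 1)
       + 2 * (p3c n n1 m * ((27 : ℝ) / 23) ^ w3 m + q3c n n1 m * ((27 : ℝ) / 23) ^ (w3 m + 1)))

/-- Lower bound of Theorem 4 for a mixed-level initial design. -/
def LBW3b1 (n n1 m1 m2 r : ℕ) (wd0 : ℝ) : ℝ :=
  Cconst n n1 (m1 + m2) (r + 1) + ((n : ℝ) ^ 2 / ((n : ℝ) + n1) ^ 2) * ((3 : ℝ) / 2) ^ (r + 1) * wd0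
  + (1 / ((n : ℝ) + n1) ^ 2) * ((5 : ℝ) / 4) ^ m1 * ((23 : ℝ) / 18) ^ (m2 + r) *
      ((3 : ℝ) / 2 * T1c n1 m1 m2 r + 2 * ((5 : ℝ) / 4) * T2c n n1 m1 m2)

/-- Lower bound of Theorem 4 for a two-level initial design. -/
def LBW3b2 (n n1 m r : ℕ) (wd0 : ℝ) : ℝ :=
  Cconst n n1 m (r + 1) + ((n : ℝ) ^ 2 / ((n : ℝ) + n1) ^ 2) * ((3 : ℝ) / 2) ^ (r + 1) * wd0
  + (1 / ((n : ℝ) + n1) ^ 2) * ((5 : ℝ) / 4) ^ m * ((23 : ℝ) / 18) ^ r *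
      ((3 : ℝ) / 2 * T1pc n1 m r +
        2 * ((5 : ℝ) / 4) * (p1c n n1 m * ((6 : ℝ) / 5) ^ w1 m + q1c n n1 m * ((6 : ℝ) / 5) ^ (w1 m + 1)))

/-- Lower bound of Theorem 4 for a three-level initial design. -/
def LBW3b3 (n n1 m r : ℕ) (wd0 : ℝ) : ℝ :=
  Cconst n n1 m (r + 1) + ((n : ℝ) ^ 2 / ((n : ℝ) + n1) ^ 2) * ((3 : ℝ) / 2) ^ (r + 1) * wd0
  + (1 / ((n : ℝ) + n1) ^ 2) * ((23 : ℝ) / 18) ^ (m + r) *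
      ((3 : ℝ) / 2 * (p2c n1 m r * ((27 : ℝ) / 23) ^ w2 n1 m r
                      + q2c n1 m r * ((27 : ℝ) / 23) ^ (w2 n1 m r + 1))
       + 2 * ((5 : ℝ) / 4) * (p3c n n1 m * ((27 : ℝ) / 23) ^ w3 m
                              + q3c n n1 m * ((27 : ℝ) / 23) ^ (w3 m + 1)))

def phi1B (n1 m1 m2 r : ℕ) : ℝ :=
  aa * ((m1 : ℝ) + 1) * ((n1 : ℝ) - 2) / (2 * ((n1 : ℝ) - 1))
  + bb * m2 * ((n1 : ℝ) - 3) / (3 * ((n1 : ℝ) - 1))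
  + bb * r * ((n1 : ℝ) - 2) / (2 * ((n1 : ℝ) - 1))

def phi2B (m1 m2 : ℕ) : ℝ := aa * ((m1 : ℝ) + 1) / 2 + bb * m2 / 3

def T1Bc (n1 m1 m2 r : ℕ) : ℝ := (n1 : ℝ) * ((n1 : ℝ) - 1) * Real.exp (phi1B n1 m1 m2 r)

def T2Bc (n n1 m1 m2 : ℕ) : ℝ := (n : ℝ) * (n1 : ℝ) * Real.exp (phi2B m1 m2)

/-- Lower bound `LBW3B` (Theorem 5). -/
def LBW3B (n n1 m1 m2 r : ℕ) (wd0 : ℝ) : ℝ :=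
  Cconst n n1 (m1 + m2) (r + 2) + ((n : ℝ) ^ 2 / ((n : ℝ) + n1) ^ 2) * ((3 : ℝ) / 2) ^ (r + 2) * wd0
  + (1 / ((n : ℝ) + n1) ^ 2) * ((5 : ℝ) / 4) ^ (m1 + 1) * ((23 : ℝ) / 18) ^ (m2 + r) *
      ((3 : ℝ) / 2 * T1Bc n1 m1 m2 r + 2 * ((5 : ℝ) / 4) * T2Bc n n1 m1 m2)

def psi1 (n1 m1 m2 r : ℕ) : ℤ :=
  ⌊((m1 : ℝ) * ((n1 : ℝ) - 2) / 2 + (m2 : ℝ) * ((n1 : ℝ) - 3) / 3 + (r : ℝ) * ((n1 : ℝ) - 2) / 2) /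
      ((n1 : ℝ) - 1)⌋

def eta1 (n1 m1 m2 r : ℕ) : ℝ :=
  (m1 : ℝ) * n1 * ((n1 : ℝ) - 2) / 2 + (m2 : ℝ) * n1 * ((n1 : ℝ) - 3) / 3
  + (r : ℝ) * n1 * ((n1 : ℝ) - 2) / 2 - (n1 : ℝ) * ((n1 : ℝ) - 1) * (psi1 n1 m1 m2 r : ℝ)

def zeta1 (n1 m1 m2 r : ℕ) : ℝ := (n1 : ℝ) * ((n1 : ℝ) - 1) - eta1 n1 m1 m2 r

def psi2 (m1 m2 : ℕ) : ℤ := ⌊(m1 : ℝ) / 2 + (m2 : ℝ) / 3⌋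

def eta2 (n n1 m1 m2 : ℕ) : ℝ :=
  (m1 : ℝ) * n * n1 / 2 + (m2 : ℝ) * n * n1 / 3 - (n : ℝ) * n1 * (psi2 m1 m2 : ℝ)

def zeta2 (n n1 m1 m2 : ℕ) : ℝ := (n : ℝ) * n1 - eta2 n n1 m1 m2

def Q1c (n1 m1 m2 r : ℕ) : ℝ :=
  zeta1 n1 m1 m2 r * (psi1 n1 m1 m2 r : ℝ) ^ 2 + eta1 n1 m1 m2 r * ((psi1 n1 m1 m2 r : ℝ) + 1) ^ 2

def Q1pc (n1 m1 m2 r : ℕ) : ℝ :=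
  zeta1 n1 m1 m2 r * ((psi1 n1 m1 m2 r : ℝ) + 1) ^ 2 + eta1 n1 m1 m2 r * ((psi1 n1 m1 m2 r : ℝ) + 2) ^ 2

def Q2c (n n1 m1 m2 : ℕ) : ℝ :=
  zeta2 n n1 m1 m2 * (psi2 m1 m2 : ℝ) ^ 2 + eta2 n n1 m1 m2 * ((psi2 m1 m2 : ℝ) + 1) ^ 2

/-- Lower bound `LBf3` for `E(f_NOD)` of the column augmented design. -/
def LBf3 (n n1 m1 m2 r : ℕ) (ef0 : ℝ) : ℝ :=
  ((m1 : ℝ) + m2) * ((m1 : ℝ) + m2 - 1) / (((m1 : ℝ) + m2 + r) * ((m1 : ℝ) + m2 + r - 1)) * ef0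
  + 1 / (((m1 : ℝ) + m2 + r) * ((m1 : ℝ) + m2 + r - 1)) * (Q1c n1 m1 m2 r + 2 * Q2c n n1 m1 m2)
  + ((n : ℝ) + n1) * ((m1 : ℝ) + m2 + r) / ((m1 : ℝ) + m2 + r - 1)
  - 1 / (((m1 : ℝ) + m2 + r) * ((m1 : ℝ) + m2 + r - 1)) *
    ((n : ℝ) * ((m1 : ℝ) + m2) ^ 2
      - (n : ℝ) ^ 2 * (((m1 : ℝ) + (m1 : ℝ) ^ 2) / 4 + (2 * (m2 : ℝ) + (m2 : ℝ) ^ 2) / 9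
          + (m1 : ℝ) * m2 / 3)
      - (r : ℝ) * m1 * n * ((n : ℝ) - 2)
      - 2 * (r : ℝ) * m2 * n * ((n : ℝ) - 3) / 3
      - (n : ℝ) * ((n : ℝ) - 1) * (r : ℝ) ^ 2
      + (r : ℝ) * ((n : ℝ) ^ 2 + (n1 : ℝ) ^ 2 / 2)
      + ((m1 : ℝ) / 2 + (m2 : ℝ) / 3 + (m1 : ℝ) * ((m1 : ℝ) - 1) / 4
          + ((m2 : ℝ) + r) * ((m2 : ℝ) + r - 1) / 9 + (m1 : ℝ) * ((m2 : ℝ) + r) / 3)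
        * ((n : ℝ) + n1) ^ 2)

/-- Lower bound `LBf3b` for `E(f_NOD)` of the design with one added blocking column. -/
def LBf3b (n n1 m1 m2 r : ℕ) (ef0 : ℝ) : ℝ :=
  ((m1 : ℝ) + m2) * ((m1 : ℝ) + m2 - 1) / (((m1 : ℝ) + m2 + r + 1) * ((m1 : ℝ) + m2 + r)) * ef0
  + 1 / (((m1 : ℝ) + m2 + r + 1) * ((m1 : ℝ) + m2 + r)) * (Q1pc n1 m1 m2 r + 2 * Q2c n n1 m1 m2)
  + ((n : ℝ) + n1) * ((m1 : ℝ) + m2 + r + 1) / ((m1 : ℝ) + m2 + r)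
  - 1 / (((m1 : ℝ) + m2 + r + 1) * ((m1 : ℝ) + m2 + r)) *
    ((n : ℝ) * ((m1 : ℝ) + m2) ^ 2
      - (n : ℝ) ^ 2 * (((m1 : ℝ) + (m1 : ℝ) ^ 2) / 4 + (2 * (m2 : ℝ) + (m2 : ℝ) ^ 2) / 9
          + (m1 : ℝ) * m2 / 3)
      - ((r : ℝ) + 1) * m1 * n * ((n : ℝ) - 2)
      - 2 * ((r : ℝ) + 1) * m2 * n * ((n : ℝ) - 3) / 3
      - (n : ℝ) * ((n : ℝ) - 1) * ((r : ℝ) + 1) ^ 2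
      + (r : ℝ) * ((n : ℝ) ^ 2 + (n1 : ℝ) ^ 2 / 2) + (n : ℝ) ^ 2 + (n1 : ℝ) ^ 2
      + ((m1 : ℝ) / 2 + (m2 : ℝ) / 3 + (m1 : ℝ) * ((m1 : ℝ) + 1) / 4
          + ((m2 : ℝ) + r) * ((m2 : ℝ) + r - 1) / 9 + ((m1 : ℝ) + 1) * ((m2 : ℝ) + r) / 3)
        * ((n : ℝ) + n1) ^ 2)

/-- Lower bound `LBf3B` for `E(f_NOD)` of the design with two added blocking columns. -/
def LBf3B (n n1 m1 m2 r : ℕ) (ef0 : ℝ) : ℝ :=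
  ((m1 : ℝ) + m2) * ((m1 : ℝ) + m2 - 1) / (((m1 : ℝ) + m2 + r + 2) * ((m1 : ℝ) + m2 + r + 1)) * ef0
  + 1 / (((m1 : ℝ) + m2 + r + 2) * ((m1 : ℝ) + m2 + r + 1)) *
      (Q1pc n1 (m1 + 1) m2 r + 2 * Q2c n n1 (m1 + 1) m2)
  + ((n : ℝ) + n1) * ((m1 : ℝ) + m2 + r + 2) / ((m1 : ℝ) + m2 + r + 1)
  - 1 / (((m1 : ℝ) + m2 + r + 2) * ((m1 : ℝ) + m2 + r + 1)) *
    ((n : ℝ) * ((m1 : ℝ) + m2) ^ 2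
      - (n : ℝ) ^ 2 * (((m1 : ℝ) + (m1 : ℝ) ^ 2) / 4 + (2 * (m2 : ℝ) + (m2 : ℝ) ^ 2) / 9
          + (m1 : ℝ) * m2 / 3)
      - ((r : ℝ) + 2) * m1 * n * ((n : ℝ) - 2)
      - 2 * ((r : ℝ) + 2) * m2 * n * ((n : ℝ) - 3) / 3
      - (n : ℝ) * ((n : ℝ) - 1) * ((r : ℝ) + 2) ^ 2
      + ((r : ℝ) + 2) * (n : ℝ) ^ 2 + (3 + (r : ℝ)) * (n1 : ℝ) ^ 2 / 2 + (n : ℝ) * n1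
      + ((m1 : ℝ) / 2 + (m2 : ℝ) / 3 + ((m1 : ℝ) + 2) * ((m1 : ℝ) + 1) / 4
          + ((m2 : ℝ) + r) * ((m2 : ℝ) + r - 1) / 9 + ((m1 : ℝ) + 2) * ((m2 : ℝ) + r) / 3)
        * ((n : ℝ) + n1) ^ 2)


-- ===== auxiliary lemmas =====

lemma single_ite {q1 q2 a b : ℕ} (ha : a < q1) (hb : b < q2) :
    ∑ u ∈ Finset.range q1, ∑ v ∈ Finset.range q2,
      (if a = u ∧ b = v then (1:ℝ) else 0) = 1 := by
  rw [Finset.sum_eq_single a]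
  · rw [Finset.sum_eq_single b]
    · simp
    · intro v _ hv; exact if_neg (fun hc => hv hc.2.symm)
    · intro h; exact absurd (Finset.mem_range.mpr hb) h
  · intro u _ hu
    apply Finset.sum_eq_zero; intro v _
    exact if_neg (fun hc => hu hc.1.symm)
  · intro h; exact absurd (Finset.mem_range.mpr ha) h

lemma key_ij {q1 q2 a b c d : ℕ} (ha : a < q1) (hb : b < q2) :
    ∑ u ∈ Finset.range q1, ∑ v ∈ Finset.range q2,
      (if a = u ∧ b = v then (1:ℝ) else 0) * (if c = u ∧ d = v then (1:ℝ) else 0)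
    = if a = c ∧ b = d then 1 else 0 := by
  by_cases h : a = c ∧ b = d
  · obtain ⟨h1, h2⟩ := h
    subst h1; subst h2
    rw [if_pos ⟨rfl, rfl⟩]
    refine (Finset.sum_congr rfl fun u _ => Finset.sum_congr rfl fun v _ => ?_).trans
      (single_ite ha hb)
    by_cases h1 : a = u ∧ b = v
    · rw [if_pos h1, mul_one]
    · rw [if_neg h1, zero_mul]
  · rw [if_neg h]
    apply Finset.sum_eq_zero; intro u _
    apply Finset.sum_eq_zero; intro v _
    by_cases h1 : a = u ∧ b = v
    · by_cases h2 : c = u ∧ d = v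
      · exact absurd ⟨h1.1.trans h2.1.symm, h1.2.trans h2.2.symm⟩ h
      · rw [if_neg h2, mul_zero]
    · rw [if_neg h1, zero_mul]

lemma sum_card_total {N q1 q2 : ℕ} (f g : Fin N → ℕ) (hf : ∀ i, f i < q1)
    (hg : ∀ i, g i < q2) :
    ∑ u ∈ Finset.range q1, ∑ v ∈ Finset.range q2,
      ((univ.filter (fun i : Fin N => f i = u ∧ g i = v)).card : ℝ) = N := by
  simp only [Finset.card_filter, Nat.cast_sum, Nat.cast_ite, Nat.cast_one, Nat.cast_zero]
  calc ∑ u ∈ Finset.range q1, ∑ v ∈ Finset.range q2, ∑ i : Fin N,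
        (if f i = u ∧ g i = v then (1:ℝ) else 0)
      = ∑ u ∈ Finset.range q1, ∑ i : Fin N, ∑ v ∈ Finset.range q2,
        (if f i = u ∧ g i = v then (1:ℝ) else 0) :=
        Finset.sum_congr rfl fun u _ => Finset.sum_comm
    _ = ∑ i : Fin N, ∑ u ∈ Finset.range q1, ∑ v ∈ Finset.range q2,
        (if f i = u ∧ g i = v then (1:ℝ) else 0) := Finset.sum_comm
    _ = ∑ _i : Fin N, (1:ℝ) :=
        Finset.sum_congr rfl fun i _ => single_ite (hf i) (hg i)
    _ = N := by simp

lemma sum_sq_card {N q1 q2 : ℕ} (f g : Fin N → ℕ) (hf : ∀ i, f i < q1)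
    (hg : ∀ i, g i < q2) :
    ∑ u ∈ Finset.range q1, ∑ v ∈ Finset.range q2,
      ((univ.filter (fun i : Fin N => f i = u ∧ g i = v)).card : ℝ) ^ 2
    = ∑ i : Fin N, ∑ j : Fin N, if f i = f j ∧ g i = g j then (1:ℝ) else 0 := by
  simp only [Finset.card_filter, Nat.cast_sum, Nat.cast_ite, Nat.cast_one, Nat.cast_zero,
    sq, Finset.sum_mul_sum]
  calc ∑ u ∈ Finset.range q1, ∑ v ∈ Finset.range q2, ∑ i : Fin N, ∑ j : Fin N,
        (if f i = u ∧ g i = v then (1:ℝ) else 0) * (if f j = u ∧ g j = v then (1:ℝ) else 0)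
      = ∑ u ∈ Finset.range q1, ∑ i : Fin N, ∑ v ∈ Finset.range q2, ∑ j : Fin N,
        (if f i = u ∧ g i = v then (1:ℝ) else 0) * (if f j = u ∧ g j = v then (1:ℝ) else 0) :=
        Finset.sum_congr rfl fun u _ => Finset.sum_comm
    _ = ∑ i : Fin N, ∑ u ∈ Finset.range q1, ∑ v ∈ Finset.range q2, ∑ j : Fin N,
        (if f i = u ∧ g i = v then (1:ℝ) else 0) * (if f j = u ∧ g j = v then (1:ℝ) else 0) :=
        Finset.sum_comm
    _ = ∑ i : Fin N, ∑ u ∈ Finset.range q1, ∑ j : Fin N, ∑ v ∈ Finset.range q2,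
        (if f i = u ∧ g i = v then (1:ℝ) else 0) * (if f j = u ∧ g j = v then (1:ℝ) else 0) :=
        Finset.sum_congr rfl fun i _ => Finset.sum_congr rfl fun u _ => Finset.sum_comm
    _ = ∑ i : Fin N, ∑ j : Fin N, ∑ u ∈ Finset.range q1, ∑ v ∈ Finset.range q2,
        (if f i = u ∧ g i = v then (1:ℝ) else 0) * (if f j = u ∧ g j = v then (1:ℝ) else 0) :=
        Finset.sum_congr rfl fun i _ => Finset.sum_comm
    _ = ∑ i : Fin N, ∑ j : Fin N, (if f i = f j ∧ g i = g j then (1:ℝ) else 0) :=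
        Finset.sum_congr rfl fun i _ => Finset.sum_congr rfl fun j _ => key_ij (hf i) (hg i)

lemma sum_sq_card_one {N q1 : ℕ} (f : Fin N → ℕ) (hf : ∀ i, f i < q1) :
    ∑ u ∈ Finset.range q1, ((univ.filter (fun i : Fin N => f i = u)).card : ℝ) ^ 2
    = ∑ i : Fin N, ∑ j : Fin N, if f i = f j then (1:ℝ) else 0 := by
  have h := sum_sq_card f (fun _ => 0) hf (fun _ => Nat.one_pos)
  simpa using h

section augEval
variable {n n1 m r : ℕ} (d0 : Fin n → Fin m → ℕ) (d1 : Fin n1 → Fin m → ℕ)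
  (d2 : Fin n1 → Fin r → ℕ)

lemma augDesign_castAdd_lt (k : Fin (m + r)) (hk : (k : ℕ) < m) (i : Fin n) :
    augDesign n n1 m r d0 d1 d2 (Fin.castAdd n1 i) k = d0 i ⟨k, hk⟩ := by
  have h1 : ((Fin.castAdd n1 i : Fin (n + n1)) : ℕ) = (i : ℕ) := rfl
  rw [augDesign]
  rw [dif_pos (h1 ▸ i.isLt), dif_pos hk]
  rfl

lemma augDesign_castAdd_ge (k : Fin (m + r)) (hk : ¬ (k : ℕ) < m) (i : Fin n) :
    augDesign n n1 m r d0 d1 d2 (Fin.castAdd n1 i) k = 0 := by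
  have h1 : ((Fin.castAdd n1 i : Fin (n + n1)) : ℕ) = (i : ℕ) := rfl
  rw [augDesign, dif_pos (h1 ▸ i.isLt), dif_neg hk]

lemma augDesign_natAdd_lt (k : Fin (m + r)) (hk : (k : ℕ) < m) (i : Fin n1) :
    augDesign n n1 m r d0 d1 d2 (Fin.natAdd n i) k = d1 i ⟨k, hk⟩ := by
  rw [augDesign, dif_neg (by simp : ¬ ((Fin.natAdd n i : Fin (n + n1)) : ℕ) < n), dif_pos hk]
  congr 1
  apply Fin.ext
  simp only [Fin.coe_natAdd]
  omega

lemma augDesign_natAdd_ge (k : Fin (m + r)) (hk : ¬ (k : ℕ) < m) (i : Fin n1) :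
    augDesign n n1 m r d0 d1 d2 (Fin.natAdd n i) k
      = d2 i ⟨(k : ℕ) - m, by have := k.isLt; omega⟩ := by
  rw [augDesign, dif_neg (by simp : ¬ ((Fin.natAdd n i : Fin (n + n1)) : ℕ) < n), dif_neg hk]
  congr 1
  apply Fin.ext
  simp only [Fin.coe_natAdd]
  omega

lemma card_filter_fin_add (p : Fin (n + n1) → ℕ) (v : ℕ) :
    (univ.filter fun i : Fin (n + n1) => p i = v).card
    = (univ.filter fun i : Fin n => p (Fin.castAdd n1 i) = v).card
      + (univ.filter fun i : Fin n1 => p (Fin.natAdd n i) = v).card := by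
  simp only [Finset.card_filter]
  exact Fin.sum_univ_add _

end augEval

lemma sum_fin_three_ranges {a b c : ℕ} (A B C : ℝ) :
    (∑ k : Fin (a + b + c), if (k : ℕ) < a then A else if (k : ℕ) < a + b then B else C)
    = a * A + b * B + c * C := by
  rw [Fin.sum_univ_eq_sum_range (fun k : ℕ => if k < a then A else if k < a + b then B else C)
    (a + b + c), Finset.sum_range_add, Finset.sum_range_add]
  have e1 : ∑ k ∈ Finset.range a,
      (if k < a then A else if k < a + b then B else C) = a * A :=
    calc ∑ k ∈ Finset.range a, (if k < a then A else if k < a + b then B else C)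
        = ∑ _k ∈ Finset.range a, A :=
          Finset.sum_congr rfl fun k hk => if_pos (Finset.mem_range.mp hk)
      _ = a * A := by simp [mul_comm]
  have e2 : ∑ k ∈ Finset.range b,
      (if a + k < a then A else if a + k < a + b then B else C) = b * B :=
    calc ∑ k ∈ Finset.range b, (if a + k < a then A else if a + k < a + b then B else C)
        = ∑ _k ∈ Finset.range b, B := Finset.sum_congr rfl fun k hk => by
          rw [if_neg (by omega), if_pos (by have := Finset.mem_range.mp hk; omega)]
      _ = b * B := by simp [mul_comm]
  have e3 : ∑ k ∈ Finset.range c,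
      (if a + b + k < a then A else if a + b + k < a + b then B else C) = c * C :=
    calc ∑ k ∈ Finset.range c, (if a + b + k < a then A else if a + b + k < a + b then B else C)
        = ∑ _k ∈ Finset.range c, C := Finset.sum_congr rfl fun k hk => by
          rw [if_neg (by omega), if_neg (by omega)]
      _ = c * C := by simp [mul_comm]
  rw [e1, e2, e3]

lemma expand_sum (s t : Finset ℕ) (x : ℕ → ℕ → ℝ) (c : ℝ) :
    ∑ u ∈ s, ∑ v ∈ t, (x u v - c) ^ 2
    = (∑ u ∈ s, ∑ v ∈ t, (x u v) ^ 2) - 2 * c * (∑ u ∈ s, ∑ v ∈ t, x u v)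
      + ((s.card : ℝ) * (t.card : ℝ)) * c ^ 2 := by
  have h : ∀ u ∈ s, ∑ v ∈ t, (x u v - c) ^ 2
      = (∑ v ∈ t, (x u v) ^ 2) - 2 * c * (∑ v ∈ t, x u v) + (t.card : ℝ) * c ^ 2 := by
    intro u _
    rw [Finset.sum_congr rfl (fun v _ => sub_sq (x u v) c), Finset.sum_add_distrib,
      Finset.sum_sub_distrib, Finset.sum_const, nsmul_eq_mul,
      show ∑ v ∈ t, 2 * x u v * c = 2 * c * ∑ v ∈ t, x u v from by
        rw [Finset.mul_sum]; exact Finset.sum_congr rfl fun v _ => by ring]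
  rw [Finset.sum_congr rfl h, Finset.sum_add_distrib, Finset.sum_sub_distrib,
    Finset.sum_const, nsmul_eq_mul, ← Finset.mul_sum]
  ring

lemma sum_ne_split {M : ℕ} (G : Fin M → Fin M → ℝ) :
    (∑ k : Fin M, ∑ l : Fin M, if k ≠ l then G k l else 0)
    = (∑ k : Fin M, ∑ l : Fin M, G k l) - ∑ k : Fin M, G k k := by
  rw [← Finset.sum_sub_distrib]
  apply Finset.sum_congr rfl; intro k _
  have h1 : (∑ l : Fin M, if k ≠ l then G k l else 0)
      = (∑ l : Fin M, G k l) - ∑ l : Fin M, if k = l then G k l else 0 := by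
    rw [← Finset.sum_sub_distrib]
    apply Finset.sum_congr rfl; intro l _
    by_cases h : k = l
    · rw [if_neg (by simp [h]), if_pos h]; ring
    · rw [if_pos h, if_neg h]; ring
  rw [h1, Finset.sum_ite_eq]
  simp



set_option maxHeartbeats 1000000 in
theorem paper_stmt_19 (n n1 m1 m2 r : ℕ) (hn : 1 ≤ n) (hn1 : 1 ≤ n1)
    (hmr : 2 ≤ m1 + m2 + r)
    (d0 : Fin n → Fin (m1 + m2) → ℕ) (d1 : Fin n1 → Fin (m1 + m2) → ℕ)
    (d2 : Fin n1 → Fin r → ℕ)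
    (hd0 : IsUType n m1 m2 d0) (hd1 : IsUType n1 m1 m2 d1) (hd2 : IsBalanced n1 r d2) :
    EfNOD (fun k : Fin (m1 + m2 + r) => qfun m1 m2 r (k : ℕ)) (augDesign n n1 (m1 + m2) r d0 d1 d2) =
      ((n : ℝ) + n1) * ((m1 : ℝ) + m2 + r) / ((m1 : ℝ) + m2 + r - 1)
      + 1 / (((m1 : ℝ) + m2 + r) * ((m1 : ℝ) + m2 + r - 1)) *
        ((∑ i : Fin (n + n1), ∑ j : Fin (n + n1),
            if i ≠ j then ((lam (augDesign n n1 (m1 + m2) r d0 d1 d2) i j : ℕ) : ℝ) ^ 2 else 0)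
          - (r : ℝ) * ((n : ℝ) ^ 2 + (n1 : ℝ) ^ 2 / 2)
          - ((m1 : ℝ) / 2 + (m2 : ℝ) / 3 + (m1 : ℝ) * ((m1 : ℝ) - 1) / 4
              + ((m2 : ℝ) + r) * ((m2 : ℝ) + r - 1) / 9 + (m1 : ℝ) * ((m2 : ℝ) + r) / 3)
            * ((n : ℝ) + n1) ^ 2) := by
  classical
  set q : Fin (m1 + m2 + r) → ℕ := fun k : Fin (m1 + m2 + r) => qfun m1 m2 r (k : ℕ) with hqd
  set D : Fin (n + n1) → Fin (m1 + m2 + r) → ℕ := augDesign n n1 (m1 + m2) r d0 d1 d2 with hDd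
  have hd2lt : ∀ (a : Fin n1) (b : Fin r), d2 a b < 3 := by
    intro a b; rcases hd2.1 a b with h | h <;> omega
  -- level sizes
  have hq : ∀ k : Fin (m1 + m2 + r), q k = if (k : ℕ) < m1 then 2 else 3 := by
    intro k
    show qfun m1 m2 r (k : ℕ) = _
    rw [qfun]
    by_cases h : (k : ℕ) < m1
    · rw [if_pos h, if_pos h]
    · rw [if_neg h, if_neg h, if_pos k.isLt]
  have hqne : ∀ k, ((q k : ℕ) : ℝ) ≠ 0 := by
    intro k; rw [hq k]; split_ifs <;> norm_num
  -- entry bounds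
  have hb : ∀ (k : Fin (m1 + m2 + r)) (i : Fin (n + n1)), D i k < q k := by
    intro k i
    rw [hq k, hDd, augDesign]
    by_cases hi : (i : ℕ) < n
    · rw [dif_pos hi]
      by_cases hk : (k : ℕ) < m1 + m2
      · rw [dif_pos hk]
        have h0 := hd0 ⟨(k : ℕ), hk⟩
        by_cases hk1 : (k : ℕ) < m1
        · rw [if_pos hk1]; rw [if_pos hk1] at h0; exact h0.1 _
        · rw [if_neg hk1]; rw [if_neg hk1] at h0; exact h0.1 _
      · rw [dif_neg hk, if_neg (by omega : ¬ (k : ℕ) < m1)]; norm_num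
    · rw [dif_neg hi]
      by_cases hk : (k : ℕ) < m1 + m2
      · rw [dif_pos hk]
        have h0 := hd1 ⟨(k : ℕ), hk⟩
        by_cases hk1 : (k : ℕ) < m1
        · rw [if_pos hk1]; rw [if_pos hk1] at h0; exact h0.1 _
        · rw [if_neg hk1]; rw [if_neg hk1] at h0; exact h0.1 _
      · rw [dif_neg hk, if_neg (by omega : ¬ (k : ℕ) < m1)]
        exact hd2lt _ _
  -- column counts, initial+followup split, for the first m1+m2 columns
  have hcnt0 : ∀ (k : Fin (m1 + m2 + r)) (hk : (k : ℕ) < m1 + m2) (v : ℕ),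
      (univ.filter fun i : Fin (n + n1) => D i k = v).card
      = (univ.filter fun i : Fin n => d0 i ⟨(k : ℕ), hk⟩ = v).card
        + (univ.filter fun i : Fin n1 => d1 i ⟨(k : ℕ), hk⟩ = v).card := by
    intro k hk v
    rw [hDd, card_filter_fin_add]
    simp only [augDesign_castAdd_lt d0 d1 d2 k hk, augDesign_natAdd_lt d0 d1 d2 k hk]
  -- real-valued count facts
  have hcnt2R : ∀ (k : Fin (m1 + m2 + r)), (k : ℕ) < m1 → ∀ v, v < 2 →
      ((univ.filter fun i : Fin (n + n1) => D i k = v).card : ℝ) = ((n : ℝ) + n1) / 2 := by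
    intro k hk1 v hv
    have hk : (k : ℕ) < m1 + m2 := by omega
    have h0 := hd0 ⟨(k : ℕ), hk⟩
    have h1 := hd1 ⟨(k : ℕ), hk⟩
    rw [if_pos hk1] at h0 h1
    have e0 := h0.2 v hv
    have e1 := h1.2 v hv
    rw [hcnt0 k hk v]
    have e0' : 2 * ((univ.filter fun i : Fin n => d0 i ⟨(k : ℕ), hk⟩ = v).card : ℝ) = n := by
      exact_mod_cast congrArg (Nat.cast : ℕ → ℝ) e0
    have e1' : 2 * ((univ.filter fun i : Fin n1 => d1 i ⟨(k : ℕ), hk⟩ = v).card : ℝ) = n1 := by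
      exact_mod_cast congrArg (Nat.cast : ℕ → ℝ) e1
    push_cast
    linarith
  have hcnt3R : ∀ (k : Fin (m1 + m2 + r)), ¬ (k : ℕ) < m1 → (k : ℕ) < m1 + m2 → ∀ v, v < 3 →
      ((univ.filter fun i : Fin (n + n1) => D i k = v).card : ℝ) = ((n : ℝ) + n1) / 3 := by
    intro k hk1 hk v hv
    have h0 := hd0 ⟨(k : ℕ), hk⟩
    have h1 := hd1 ⟨(k : ℕ), hk⟩
    rw [if_neg hk1] at h0 h1
    have e0 := h0.2 v hv
    have e1 := h1.2 v hv
    rw [hcnt0 k hk v]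
    have e0' : 3 * ((univ.filter fun i : Fin n => d0 i ⟨(k : ℕ), hk⟩ = v).card : ℝ) = n := by
      exact_mod_cast congrArg (Nat.cast : ℕ → ℝ) e0
    have e1' : 3 * ((univ.filter fun i : Fin n1 => d1 i ⟨(k : ℕ), hk⟩ = v).card : ℝ) = n1 := by
      exact_mod_cast congrArg (Nat.cast : ℕ → ℝ) e1
    push_cast
    linarith
  have hcntrR : ∀ (k : Fin (m1 + m2 + r)), ¬ (k : ℕ) < m1 + m2 →
      ((univ.filter fun i : Fin (n + n1) => D i k = 0).card : ℝ) = n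
      ∧ ((univ.filter fun i : Fin (n + n1) => D i k = 1).card : ℝ) = (n1 : ℝ) / 2
      ∧ ((univ.filter fun i : Fin (n + n1) => D i k = 2).card : ℝ) = (n1 : ℝ) / 2 := by
    intro k hk
    have hrw : ∀ v, (univ.filter fun i : Fin (n + n1) => D i k = v).card
        = (univ.filter fun i : Fin n => (0 : ℕ) = v).card
          + (univ.filter fun i : Fin n1 =>
              d2 i ⟨(k : ℕ) - (m1 + m2), by have := k.isLt; omega⟩ = v).card := by
      intro v
      rw [hDd, card_filter_fin_add]
      simp only [augDesign_castAdd_ge d0 d1 d2 k hk, augDesign_natAdd_ge d0 d1 d2 k hk]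
    have h2 := hd2.2 ⟨(k : ℕ) - (m1 + m2), by have := k.isLt; omega⟩
    refine ⟨?_, ?_, ?_⟩
    · rw [hrw 0]
      have hz : (univ.filter fun i : Fin n1 =>
          d2 i ⟨(k : ℕ) - (m1 + m2), by have := k.isLt; omega⟩ = 0).card = 0 := by
        rw [Finset.card_eq_zero, Finset.filter_eq_empty_iff]
        intro i _
        rcases hd2.1 i ⟨(k : ℕ) - (m1 + m2), by have := k.isLt; omega⟩ with h | h <;> omega
      rw [hz]
      simp
    · rw [hrw 1]
      have h1 : (univ.filter fun _i : Fin n => (0 : ℕ) = 1).card = 0 := by simp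
      rw [h1, zero_add]
      have := h2.1
      have e1' : 2 * ((univ.filter fun i : Fin n1 =>
          d2 i ⟨(k : ℕ) - (m1 + m2), by have := k.isLt; omega⟩ = 1).card : ℝ) = n1 := by
        exact_mod_cast congrArg (Nat.cast : ℕ → ℝ) this
      linarith
    · rw [hrw 2]
      have h1 : (univ.filter fun _i : Fin n => (0 : ℕ) = 2).card = 0 := by simp
      rw [h1, zero_add]
      have := h2.2
      have e1' : 2 * ((univ.filter fun i : Fin n1 =>
          d2 i ⟨(k : ℕ) - (m1 + m2), by have := k.isLt; omega⟩ = 2).card : ℝ) = n1 := by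
        exact_mod_cast congrArg (Nat.cast : ℕ → ℝ) this
      linarith
  -- per-column pair sums
  have hcol : ∀ k : Fin (m1 + m2 + r),
      (∑ i : Fin (n + n1), ∑ j : Fin (n + n1), (if D i k = D j k then (1 : ℝ) else 0))
      = if (k : ℕ) < m1 then ((n : ℝ) + n1) ^ 2 / 2
        else if (k : ℕ) < m1 + m2 then ((n : ℝ) + n1) ^ 2 / 3
        else (n : ℝ) ^ 2 + (n1 : ℝ) ^ 2 / 2 := by
    intro k
    have h1 : (∑ i : Fin (n + n1), ∑ j : Fin (n + n1), (if D i k = D j k then (1 : ℝ) else 0))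
        = ∑ u ∈ Finset.range (q k),
            ((univ.filter fun i : Fin (n + n1) => D i k = u).card : ℝ) ^ 2 :=
      (sum_sq_card_one (fun i => D i k) (hb k)).symm
    rw [h1, hq k]
    by_cases hk1 : (k : ℕ) < m1
    · rw [if_pos hk1, if_pos hk1, Finset.sum_range_succ, Finset.sum_range_one,
        hcnt2R k hk1 0 (by norm_num), hcnt2R k hk1 1 (by norm_num)]
      ring
    · rw [if_neg hk1, if_neg hk1]
      by_cases hk2 : (k : ℕ) < m1 + m2
      · rw [if_pos hk2, Finset.sum_range_succ, Finset.sum_range_succ, Finset.sum_range_one,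
          hcnt3R k hk1 hk2 0 (by norm_num), hcnt3R k hk1 hk2 1 (by norm_num),
          hcnt3R k hk1 hk2 2 (by norm_num)]
        ring
      · rw [if_neg hk2]
        obtain ⟨c0, c1, c2⟩ := hcntrR k hk2
        rw [Finset.sum_range_succ, Finset.sum_range_succ, Finset.sum_range_one, c0, c1, c2]
        ring
  -- lam facts
  have hlamc : ∀ i j : Fin (n + n1),
      ((lam D i j : ℕ) : ℝ) = ∑ k, (if D i k = D j k then (1 : ℝ) else 0) := by
    intro i j
    rw [lam]
    simp only [Finset.card_filter, Nat.cast_sum, Nat.cast_ite, Nat.cast_one, Nat.cast_zero]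
  have hdiag : ∀ i : Fin (n + n1), lam D i i = m1 + m2 + r := by
    intro i; rw [lam]; simp
  -- total lambda sum
  have hSlam : (∑ i : Fin (n + n1), ∑ j : Fin (n + n1), ((lam D i j : ℕ) : ℝ))
      = m1 * (((n : ℝ) + n1) ^ 2 / 2) + m2 * (((n : ℝ) + n1) ^ 2 / 3)
        + r * ((n : ℝ) ^ 2 + (n1 : ℝ) ^ 2 / 2) := by
    calc ∑ i : Fin (n + n1), ∑ j : Fin (n + n1), ((lam D i j : ℕ) : ℝ)
        = ∑ i : Fin (n + n1), ∑ j : Fin (n + n1), ∑ k : Fin (m1 + m2 + r),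
            (if D i k = D j k then (1 : ℝ) else 0) :=
          Finset.sum_congr rfl fun i _ => Finset.sum_congr rfl fun j _ => hlamc i j
      _ = ∑ i : Fin (n + n1), ∑ k : Fin (m1 + m2 + r), ∑ j : Fin (n + n1),
            (if D i k = D j k then (1 : ℝ) else 0) :=
          Finset.sum_congr rfl fun i _ => Finset.sum_comm
      _ = ∑ k : Fin (m1 + m2 + r), ∑ i : Fin (n + n1), ∑ j : Fin (n + n1),
            (if D i k = D j k then (1 : ℝ) else 0) := Finset.sum_comm
      _ = ∑ k : Fin (m1 + m2 + r),
            (if (k : ℕ) < m1 then ((n : ℝ) + n1) ^ 2 / 2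
             else if (k : ℕ) < m1 + m2 then ((n : ℝ) + n1) ^ 2 / 3
             else (n : ℝ) ^ 2 + (n1 : ℝ) ^ 2 / 2) :=
          Finset.sum_congr rfl fun k _ => hcol k
      _ = _ := sum_fin_three_ranges _ _ _
  -- fNOD formula
  have hfN : ∀ k l : Fin (m1 + m2 + r), fNOD q D k l
      = (∑ i : Fin (n + n1), ∑ j : Fin (n + n1),
          (if D i k = D j k ∧ D i l = D j l then (1 : ℝ) else 0))
        - ((n : ℝ) + n1) ^ 2 / ((q k : ℝ) * (q l : ℝ)) := by
    intro k l
    have hsq : (∑ u ∈ Finset.range (q k), ∑ v ∈ Finset.range (q l),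
        ((nuv D k l u v : ℕ) : ℝ) ^ 2)
        = ∑ i : Fin (n + n1), ∑ j : Fin (n + n1),
            (if D i k = D j k ∧ D i l = D j l then (1 : ℝ) else 0) := by
      have h := sum_sq_card (fun i => D i k) (fun i => D i l) (hb k) (hb l)
      simpa [nuv] using h
    have htot : (∑ u ∈ Finset.range (q k), ∑ v ∈ Finset.range (q l),
        ((nuv D k l u v : ℕ) : ℝ)) = (n : ℝ) + n1 := by
      have h := sum_card_total (fun i => D i k) (fun i => D i l) (hb k) (hb l)
      have h2 : ((n + n1 : ℕ) : ℝ) = (n : ℝ) + n1 := by push_cast; ring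
      rw [h2] at h
      simpa [nuv] using h
    have hN : ((n + n1 : ℕ) : ℝ) = (n : ℝ) + n1 := by push_cast; ring
    rw [fNOD, expand_sum, hsq, htot, Finset.card_range, Finset.card_range, hN]
    have h1 := hqne k
    have h2 := hqne l
    field_simp
    ring
  -- symmetry of fNOD
  have hsym : ∀ k l, fNOD q D k l = fNOD q D l k := by
    intro k l
    rw [hfN k l, hfN l k, mul_comm ((q l : ℕ) : ℝ) ((q k : ℕ) : ℝ)]
    have hP : (∑ i : Fin (n + n1), ∑ j : Fin (n + n1),
        (if D i k = D j k ∧ D i l = D j l then (1 : ℝ) else 0))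
        = ∑ i : Fin (n + n1), ∑ j : Fin (n + n1),
            if D i l = D j l ∧ D i k = D j k then (1 : ℝ) else 0 :=
      Finset.sum_congr rfl fun i _ => Finset.sum_congr rfl fun j _ =>
        if_congr and_comm rfl rfl
    rw [hP]
  -- doubling
  have key2 : 2 * (∑ k : Fin (m1 + m2 + r), ∑ l : Fin (m1 + m2 + r),
      if (k : ℕ) < (l : ℕ) then fNOD q D k l else 0)
      = ∑ k : Fin (m1 + m2 + r), ∑ l : Fin (m1 + m2 + r),
          if k ≠ l then fNOD q D k l else 0 := by
    have hswap : (∑ k : Fin (m1 + m2 + r), ∑ l : Fin (m1 + m2 + r),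
        if (k : ℕ) < (l : ℕ) then fNOD q D k l else 0)
        = ∑ k : Fin (m1 + m2 + r), ∑ l : Fin (m1 + m2 + r),
            if (l : ℕ) < (k : ℕ) then fNOD q D k l else 0 := by
      rw [Finset.sum_comm]
      apply Finset.sum_congr rfl; intro k _
      apply Finset.sum_congr rfl; intro l _
      exact if_congr Iff.rfl (hsym l k) rfl
    rw [two_mul]
    nth_rewrite 2 [hswap]
    rw [← Finset.sum_add_distrib]
    apply Finset.sum_congr rfl; intro k _
    rw [← Finset.sum_add_distrib]
    apply Finset.sum_congr rfl; intro l _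
    by_cases h : (k : ℕ) < (l : ℕ)
    · have hne : k ≠ l := by intro he; rw [he] at h; omega
      rw [if_pos h, if_neg (by omega : ¬ (l : ℕ) < (k : ℕ)), if_pos hne]; ring
    · by_cases h2 : (l : ℕ) < (k : ℕ)
      · have hne : k ≠ l := by intro he; rw [he] at h2; omega
        rw [if_neg h, if_pos h2, if_pos hne]; ring
      · have he : k = l := Fin.ext (by omega)
        rw [if_neg h, if_neg h2, if_neg (by simp [he])]; ring
  -- split into P part and Q part
  have hsplitF : (∑ k : Fin (m1 + m2 + r), ∑ l : Fin (m1 + m2 + r),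
      if k ≠ l then fNOD q D k l else 0)
      = (∑ k : Fin (m1 + m2 + r), ∑ l : Fin (m1 + m2 + r),
          if k ≠ l then (∑ i : Fin (n + n1), ∑ j : Fin (n + n1),
            (if D i k = D j k ∧ D i l = D j l then (1 : ℝ) else 0)) else 0)
        - ∑ k : Fin (m1 + m2 + r), ∑ l : Fin (m1 + m2 + r),
            if k ≠ l then ((n : ℝ) + n1) ^ 2 / ((q k : ℝ) * (q l : ℝ)) else 0 := by
    rw [← Finset.sum_sub_distrib]
    apply Finset.sum_congr rfl; intro k _
    rw [← Finset.sum_sub_distrib]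
    apply Finset.sum_congr rfl; intro l _
    by_cases h : k ≠ l
    · rw [if_pos h, if_pos h, if_pos h, hfN]
    · rw [if_neg h, if_neg h, if_neg h]; ring
  -- P sums
  have hPsplit : (∑ k : Fin (m1 + m2 + r), ∑ l : Fin (m1 + m2 + r),
      if k ≠ l then (∑ i : Fin (n + n1), ∑ j : Fin (n + n1),
        (if D i k = D j k ∧ D i l = D j l then (1 : ℝ) else 0)) else 0)
      = (∑ k : Fin (m1 + m2 + r), ∑ l : Fin (m1 + m2 + r), ∑ i : Fin (n + n1),
          ∑ j : Fin (n + n1), (if D i k = D j k ∧ D i l = D j l then (1 : ℝ) else 0))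
        - ∑ k : Fin (m1 + m2 + r), ∑ i : Fin (n + n1), ∑ j : Fin (n + n1),
            (if D i k = D j k ∧ D i k = D j k then (1 : ℝ) else 0) :=
    sum_ne_split _
  have hQsplit : (∑ k : Fin (m1 + m2 + r), ∑ l : Fin (m1 + m2 + r),
      if k ≠ l then ((n : ℝ) + n1) ^ 2 / ((q k : ℝ) * (q l : ℝ)) else 0)
      = (∑ k : Fin (m1 + m2 + r), ∑ l : Fin (m1 + m2 + r),
          ((n : ℝ) + n1) ^ 2 / ((q k : ℝ) * (q l : ℝ)))
        - ∑ k : Fin (m1 + m2 + r), ((n : ℝ) + n1) ^ 2 / ((q k : ℝ) * (q k : ℝ)) :=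
    sum_ne_split _
  have hPall : (∑ k : Fin (m1 + m2 + r), ∑ l : Fin (m1 + m2 + r), ∑ i : Fin (n + n1),
      ∑ j : Fin (n + n1), (if D i k = D j k ∧ D i l = D j l then (1 : ℝ) else 0))
      = ∑ i : Fin (n + n1), ∑ j : Fin (n + n1), ((lam D i j : ℕ) : ℝ) ^ 2 := by
    calc ∑ k : Fin (m1 + m2 + r), ∑ l : Fin (m1 + m2 + r), ∑ i : Fin (n + n1),
          ∑ j : Fin (n + n1), (if D i k = D j k ∧ D i l = D j l then (1 : ℝ) else 0)
        = ∑ k : Fin (m1 + m2 + r), ∑ i : Fin (n + n1), ∑ l : Fin (m1 + m2 + r),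
          ∑ j : Fin (n + n1), (if D i k = D j k ∧ D i l = D j l then (1 : ℝ) else 0) :=
          Finset.sum_congr rfl fun k _ => Finset.sum_comm
      _ = ∑ i : Fin (n + n1), ∑ k : Fin (m1 + m2 + r), ∑ l : Fin (m1 + m2 + r),
          ∑ j : Fin (n + n1), (if D i k = D j k ∧ D i l = D j l then (1 : ℝ) else 0) :=
          Finset.sum_comm
      _ = ∑ i : Fin (n + n1), ∑ k : Fin (m1 + m2 + r), ∑ j : Fin (n + n1),
          ∑ l : Fin (m1 + m2 + r), (if D i k = D j k ∧ D i l = D j l then (1 : ℝ) else 0) :=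
          Finset.sum_congr rfl fun i _ => Finset.sum_congr rfl fun k _ => Finset.sum_comm
      _ = ∑ i : Fin (n + n1), ∑ j : Fin (n + n1), ∑ k : Fin (m1 + m2 + r),
          ∑ l : Fin (m1 + m2 + r), (if D i k = D j k ∧ D i l = D j l then (1 : ℝ) else 0) :=
          Finset.sum_congr rfl fun i _ => Finset.sum_comm
      _ = ∑ i : Fin (n + n1), ∑ j : Fin (n + n1), ((lam D i j : ℕ) : ℝ) ^ 2 := by
          apply Finset.sum_congr rfl; intro i _
          apply Finset.sum_congr rfl; intro j _
          have hprod : ∀ (k l : Fin (m1 + m2 + r)),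
              ((if D i k = D j k ∧ D i l = D j l then (1 : ℝ) else 0))
              = ((if D i k = D j k then (1 : ℝ) else 0)) * ((if D i l = D j l then (1 : ℝ) else 0)) := by
            intro k l
            by_cases h1 : D i k = D j k
            · by_cases h2 : D i l = D j l
              · rw [if_pos ⟨h1, h2⟩, if_pos h1, if_pos h2]; ring
              · rw [if_neg (fun hc => h2 hc.2), if_pos h1, if_neg h2]; ring
            · rw [if_neg (fun hc => h1 hc.1), if_neg h1]; ring
          rw [Finset.sum_congr rfl fun k _ => Finset.sum_congr rfl fun l _ => hprod k l]
          rw [← Finset.sum_mul_sum, hlamc i j, sq]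
  have hPdiag : (∑ k : Fin (m1 + m2 + r), ∑ i : Fin (n + n1), ∑ j : Fin (n + n1),
      (if D i k = D j k ∧ D i k = D j k then (1 : ℝ) else 0))
      = ∑ i : Fin (n + n1), ∑ j : Fin (n + n1), ((lam D i j : ℕ) : ℝ) := by
    calc ∑ k : Fin (m1 + m2 + r), ∑ i : Fin (n + n1), ∑ j : Fin (n + n1),
          (if D i k = D j k ∧ D i k = D j k then (1 : ℝ) else 0)
        = ∑ i : Fin (n + n1), ∑ k : Fin (m1 + m2 + r), ∑ j : Fin (n + n1),
          (if D i k = D j k ∧ D i k = D j k then (1 : ℝ) else 0) := Finset.sum_comm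
      _ = ∑ i : Fin (n + n1), ∑ j : Fin (n + n1), ∑ k : Fin (m1 + m2 + r),
          (if D i k = D j k ∧ D i k = D j k then (1 : ℝ) else 0) :=
          Finset.sum_congr rfl fun i _ => Finset.sum_comm
      _ = ∑ i : Fin (n + n1), ∑ j : Fin (n + n1), ((lam D i j : ℕ) : ℝ) := by
          apply Finset.sum_congr rfl; intro i _
          apply Finset.sum_congr rfl; intro j _
          rw [hlamc i j]
          apply Finset.sum_congr rfl; intro k _
          exact if_congr and_self_iff rfl rfl
  -- lambda squared split
  have hlam2 : (∑ i : Fin (n + n1), ∑ j : Fin (n + n1), ((lam D i j : ℕ) : ℝ) ^ 2)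
      = (∑ i : Fin (n + n1), ∑ j : Fin (n + n1),
          if i ≠ j then ((lam D i j : ℕ) : ℝ) ^ 2 else 0)
        + ((n : ℝ) + n1) * ((m1 : ℝ) + m2 + r) ^ 2 := by
    have h := sum_ne_split (fun i j : Fin (n + n1) => ((lam D i j : ℕ) : ℝ) ^ 2)
    have hdsum : (∑ i : Fin (n + n1), ((lam D i i : ℕ) : ℝ) ^ 2)
        = ((n : ℝ) + n1) * ((m1 : ℝ) + m2 + r) ^ 2 := by
      rw [Finset.sum_congr rfl fun i _ => by rw [hdiag i]]
      rw [Finset.sum_const, nsmul_eq_mul]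
      simp only [Finset.card_univ, Fintype.card_fin]
      push_cast
      ring
    rw [hdsum] at h
    linarith [h]
  -- Q computations
  have hq1 : ∀ k : Fin (m1 + m2 + r), (1 : ℝ) / ((q k : ℕ) : ℝ)
      = if (k : ℕ) < m1 then (1 : ℝ) / 2 else if (k : ℕ) < m1 + m2 then (1 : ℝ) / 3
        else (1 : ℝ) / 3 := by
    intro k; rw [hq k]; split_ifs <;> norm_num
  have hs1 : (∑ k : Fin (m1 + m2 + r), (1 : ℝ) / ((q k : ℕ) : ℝ))
      = (m1 : ℝ) / 2 + ((m2 : ℝ) + r) / 3 := by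
    rw [Finset.sum_congr rfl fun k _ => hq1 k, sum_fin_three_ranges]
    ring
  have hQall : (∑ k : Fin (m1 + m2 + r), ∑ l : Fin (m1 + m2 + r),
      ((n : ℝ) + n1) ^ 2 / ((q k : ℝ) * (q l : ℝ)))
      = ((n : ℝ) + n1) ^ 2 * ((m1 : ℝ) / 2 + ((m2 : ℝ) + r) / 3) ^ 2 := by
    have hpt : ∀ k l : Fin (m1 + m2 + r),
        ((n : ℝ) + n1) ^ 2 / ((q k : ℝ) * (q l : ℝ))
        = (((n : ℝ) + n1) ^ 2 * ((1 : ℝ) / ((q k : ℕ) : ℝ))) * ((1 : ℝ) / ((q l : ℕ) : ℝ)) := by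
      intro k l
      field_simp
    rw [Finset.sum_congr rfl fun k _ => Finset.sum_congr rfl fun l _ => hpt k l]
    have hfac : ∀ k : Fin (m1 + m2 + r),
        (∑ l : Fin (m1 + m2 + r),
          (((n : ℝ) + n1) ^ 2 * ((1 : ℝ) / ((q k : ℕ) : ℝ))) * ((1 : ℝ) / ((q l : ℕ) : ℝ)))
        = (((n : ℝ) + n1) ^ 2 * ((1 : ℝ) / ((q k : ℕ) : ℝ))) * ((m1 : ℝ) / 2 + ((m2 : ℝ) + r) / 3) := by
      intro k
      rw [← Finset.mul_sum, hs1]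
    rw [Finset.sum_congr rfl fun k _ => hfac k]
    rw [← Finset.sum_mul, ← Finset.mul_sum, hs1]
    ring
  have hQdiag : (∑ k : Fin (m1 + m2 + r), ((n : ℝ) + n1) ^ 2 / ((q k : ℝ) * (q k : ℝ)))
      = ((n : ℝ) + n1) ^ 2 * ((m1 : ℝ) / 4 + ((m2 : ℝ) + r) / 9) := by
    have hpt : ∀ k : Fin (m1 + m2 + r),
        ((n : ℝ) + n1) ^ 2 / ((q k : ℝ) * (q k : ℝ))
        = if (k : ℕ) < m1 then ((n : ℝ) + n1) ^ 2 / 4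
          else if (k : ℕ) < m1 + m2 then ((n : ℝ) + n1) ^ 2 / 9
          else ((n : ℝ) + n1) ^ 2 / 9 := by
      intro k; rw [hq k]; split_ifs <;> norm_num
    rw [Finset.sum_congr rfl fun k _ => hpt k, sum_fin_three_ranges]
    ring
  -- assemble the numerator
  have hval : (∑ k : Fin (m1 + m2 + r), ∑ l : Fin (m1 + m2 + r),
      if k ≠ l then fNOD q D k l else 0)
      = (∑ i : Fin (n + n1), ∑ j : Fin (n + n1),
          if i ≠ j then ((lam D i j : ℕ) : ℝ) ^ 2 else 0)
        + ((n : ℝ) + n1) * ((m1 : ℝ) + m2 + r) ^ 2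
        - (m1 * (((n : ℝ) + n1) ^ 2 / 2) + m2 * (((n : ℝ) + n1) ^ 2 / 3)
            + r * ((n : ℝ) ^ 2 + (n1 : ℝ) ^ 2 / 2))
        - (((n : ℝ) + n1) ^ 2 * ((m1 : ℝ) / 2 + ((m2 : ℝ) + r) / 3) ^ 2
            - ((n : ℝ) + n1) ^ 2 * ((m1 : ℝ) / 4 + ((m2 : ℝ) + r) / 9)) := by
    rw [hsplitF, hPsplit, hQsplit, hPall, hPdiag, hQall, hQdiag, hlam2, hSlam]
    try ring
  -- final computation
  rw [EfNOD]
  have hch : ((Nat.choose (m1 + m2 + r) 2 : ℕ) : ℝ)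
      = ((m1 : ℝ) + m2 + r) * (((m1 : ℝ) + m2 + r) - 1) / 2 := by
    rw [Nat.cast_choose_two]
    push_cast
    ring
  have hM2 : (2 : ℝ) ≤ (m1 : ℝ) + m2 + r := by exact_mod_cast hmr
  have hMne : ((m1 : ℝ) + m2 + r) ≠ 0 := by linarith
  have hM1ne : ((m1 : ℝ) + m2 + r) - 1 ≠ 0 := by
    intro h; rw [sub_eq_zero] at h; linarith
  have hNum : (∑ k : Fin (m1 + m2 + r), ∑ l : Fin (m1 + m2 + r),
      if (k : ℕ) < (l : ℕ) then fNOD q D k l else 0)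
      = ((∑ i : Fin (n + n1), ∑ j : Fin (n + n1),
          if i ≠ j then ((lam D i j : ℕ) : ℝ) ^ 2 else 0)
        + ((n : ℝ) + n1) * ((m1 : ℝ) + m2 + r) ^ 2
        - (m1 * (((n : ℝ) + n1) ^ 2 / 2) + m2 * (((n : ℝ) + n1) ^ 2 / 3)
            + r * ((n : ℝ) ^ 2 + (n1 : ℝ) ^ 2 / 2))
        - (((n : ℝ) + n1) ^ 2 * ((m1 : ℝ) / 2 + ((m2 : ℝ) + r) / 3) ^ 2
            - ((n : ℝ) + n1) ^ 2 * ((m1 : ℝ) / 4 + ((m2 : ℝ) + r) / 9))) / 2 := by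
    rw [eq_div_iff (by norm_num : (2 : ℝ) ≠ 0), mul_comm, ← hval, ← key2]
  rw [hNum, hch]
  field_simp
  ring
end CAUD

end
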